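/- arXiv:1102.2878 — 2 statements merged into one kernel-verified Lean document; each statement's English description precedes it below -/
import Mathlib

section
/- Let D ≥ 1, h > 0, and t, t₀, s ∈ ℝᴰ. Then the multivariate local (dual) Hermite expansion holds: e^{−‖t − s‖²/(2h²)} = Σ_{β ∈ ℕᴰ} ((−1)^{|β|}/β!) h_β((t₀ − s)/√(2h²)) ((t − t₀)/√(2h²))^β, where ‖·‖ is the Euclidean norm and the multi-index series converges (e.g., the family is summable). -/
open Finset

/-- The `n`-th Hermite function: `hₙ(t) = (−1)ⁿ (dⁿ/dtⁿ) e^{−t²}`. -/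
noncomputable def hermiteFun (n : ℕ) (t : ℝ) : ℝ :=
  (-1 : ℝ) ^ n * iteratedDeriv n (fun x => Real.exp (-x ^ 2)) t

/-- Multivariate Hermite function `h_β(x) = ∏_{d} h_{β[d]}(x[d])`. -/
noncomputable def hermiteFunMulti {D : ℕ} (β : Fin D → ℕ) (x : Fin D → ℝ) : ℝ :=
  ∏ d, hermiteFun (β d) (x d)

/-- Multi-index factorial `β! = ∏_d (β[d])!`. -/
def mFactorial {D : ℕ} (β : Fin D → ℕ) : ℕ := ∏ d, Nat.factorial (β d)

/-- Multi-index power `x^β = ∏_d (x[d])^{β[d]}`. -/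
def mPow {D : ℕ} (x : Fin D → ℝ) (β : Fin D → ℕ) : ℝ := ∏ d, (x d) ^ (β d)

/-- Multi-index degree `|β| = Σ_d β[d]`. -/
def mDeg {D : ℕ} (β : Fin D → ℕ) : ℕ := ∑ d, β d

private lemma gaussC_diff : Differentiable ℂ (fun z : ℂ => Complex.exp (-z ^ 2)) :=
  ((differentiable_pow 2).neg).cexp

private lemma gaussR_contDiff : ContDiff ℝ ⊤ (fun y : ℝ => Real.exp (-y ^ 2)) :=
  Real.contDiff_exp.comp ((contDiff_id.pow 2).neg)

private lemma iteratedDeriv_gauss_ofReal (n : ℕ) (x : ℝ) :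
    iteratedDeriv n (fun z : ℂ => Complex.exp (-z ^ 2)) (x : ℂ)
      = Complex.ofReal (iteratedDeriv n (fun y : ℝ => Real.exp (-y ^ 2)) x) := by
  induction n generalizing x with
  | zero =>
    simp only [iteratedDeriv_zero, Complex.ofReal_exp, Complex.ofReal_neg, Complex.ofReal_pow]
  | succ n ih =>
    have hFn : Differentiable ℂ (iteratedDeriv n (fun z : ℂ => Complex.exp (-z ^ 2))) :=
      (gaussC_diff.contDiff (n := ⊤)).differentiable_iteratedDeriv n
        (by exact_mod_cast lt_of_lt_of_le (WithTop.coe_lt_top _) le_rfl)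
    have hgn : Differentiable ℝ (iteratedDeriv n (fun y : ℝ => Real.exp (-y ^ 2))) :=
      gaussR_contDiff.differentiable_iteratedDeriv n
        (by exact_mod_cast lt_of_lt_of_le (WithTop.coe_lt_top _) le_rfl)
    have h1 : HasDerivAt (fun y : ℝ =>
        iteratedDeriv n (fun z : ℂ => Complex.exp (-z ^ 2)) (y : ℂ))
        (deriv (iteratedDeriv n (fun z : ℂ => Complex.exp (-z ^ 2))) (x : ℂ)) x :=
      (hFn _).hasDerivAt.comp_ofReal
    have h2 : HasDerivAt (fun y : ℝ =>
        Complex.ofReal (iteratedDeriv n (fun y : ℝ => Real.exp (-y ^ 2)) y))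
        (Complex.ofReal (deriv (iteratedDeriv n (fun y : ℝ => Real.exp (-y ^ 2))) x)) x :=
      ((hgn x).hasDerivAt).ofReal_comp
    have heq : (fun y : ℝ => iteratedDeriv n (fun z : ℂ => Complex.exp (-z ^ 2)) (y : ℂ))
        = fun y : ℝ => Complex.ofReal (iteratedDeriv n (fun y : ℝ => Real.exp (-y ^ 2)) y) := by
      funext y; exact ih y
    rw [heq] at h1
    rw [iteratedDeriv_succ, iteratedDeriv_succ, h1.unique h2]

private lemma oneD (a x : ℝ) :
    HasSum (fun n : ℕ => (-1 : ℝ) ^ n / (n.factorial : ℝ) * hermiteFun n a * x ^ n)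
      (Real.exp (-(a + x) ^ 2)) := by
  have hsimp : ∀ n : ℕ, (-1 : ℝ) ^ n / (n.factorial : ℝ) * hermiteFun n a * x ^ n
      = iteratedDeriv n (fun y : ℝ => Real.exp (-y ^ 2)) a * x ^ n / (n.factorial : ℝ) := by
    intro n
    rw [hermiteFun]
    have h1 : ((-1 : ℝ)) ^ n * (-1 : ℝ) ^ n = 1 := by
      rw [← pow_add, ← two_mul, pow_mul]; norm_num
    calc (-1 : ℝ) ^ n / (n.factorial : ℝ)
          * ((-1 : ℝ) ^ n * iteratedDeriv n (fun x => Real.exp (-x ^ 2)) a) * x ^ n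
        = ((-1 : ℝ) ^ n * (-1 : ℝ) ^ n)
            * (iteratedDeriv n (fun x => Real.exp (-x ^ 2)) a * x ^ n / (n.factorial : ℝ)) := by
          ring
      _ = iteratedDeriv n (fun y : ℝ => Real.exp (-y ^ 2)) a * x ^ n / (n.factorial : ℝ) := by
          rw [h1, one_mul]
  simp only [hsimp]
  rw [← Complex.hasSum_ofReal]
  have H := Complex.hasSum_taylorSeries_of_entire gaussC_diff (a : ℂ) ((a + x : ℝ) : ℂ)
  convert H using 2 with n
  · rfl
  · rw [iteratedDeriv_gauss_ofReal n a, smul_eq_mul, smul_eq_mul]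
    have hx : ((a + x : ℝ) : ℂ) - (a : ℂ) = (x : ℂ) := by push_cast; ring
    rw [hx]
    push_cast
    ring
  · rw [Complex.ofReal_exp]
    push_cast
    ring_nf

set_option maxHeartbeats 1000000 in
private lemma pi_hasSum : ∀ (D : ℕ) (f : Fin D → ℕ → ℝ) (a : Fin D → ℝ),
    (∀ d, HasSum (f d) (a d)) →
    HasSum (fun β : Fin D → ℕ => ∏ d, f d (β d)) (∏ d, a d) := by
  intro D
  induction D with
  | zero =>
    intro f a _
    have : HasSum (fun _ : Fin 0 → ℕ => (1 : ℝ)) 1 :=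
      hasSum_single (default : Fin 0 → ℕ) (fun b hb => (hb (Subsingleton.elim b default)).elim)
    simpa using this
  | succ D ih =>
    intro f a hf
    have h0 : HasSum (f 0) (a 0) := hf 0
    have hrest : HasSum (fun β : Fin D → ℕ => ∏ d, f d.succ (β d)) (∏ d : Fin D, a d.succ) :=
      ih (fun d => f d.succ) (fun d => a d.succ) (fun d => hf d.succ)
    have hn1 : Summable fun n : ℕ => ‖f 0 n‖ := by
      simpa only [Real.norm_eq_abs] using h0.summable.abs
    have hn2 : Summable fun β : Fin D → ℕ => ‖∏ d, f d.succ (β d)‖ := by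
      simpa only [Real.norm_eq_abs] using hrest.summable.abs
    have hsummable : Summable (fun p : ℕ × (Fin D → ℕ) =>
        f 0 p.1 * ∏ d, f d.succ (p.2 d)) := (hn1.mul_norm hn2).of_norm
    have hmul := h0.mul hrest hsummable
    apply (Fin.consEquiv (fun _ : Fin (D + 1) => ℕ)).hasSum_iff.mp
    have hcomp : ((fun β : Fin (D + 1) → ℕ => ∏ d, f d (β d)) ∘
        (Fin.consEquiv (fun _ : Fin (D + 1) => ℕ)))
        = fun p : ℕ × (Fin D → ℕ) => f 0 p.1 * ∏ d, f d.succ (p.2 d) := by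
      funext p
      simp [Fin.consEquiv, Fin.prod_univ_succ]
    rw [hcomp, Fin.prod_univ_succ]
    exact hmul

/-- Multivariate local (dual) Hermite expansion:
`e^{−‖t − s‖²/(2h²)} = Σ_{β ∈ ℕᴰ} ((−1)^{|β|}/β!) h_β((t₀ − s)/√(2h²)) ((t − t₀)/√(2h²))^β`,
the multi-index family being summable. -/
theorem multivariate_local_expansion (D : ℕ) (hD : 1 ≤ D) (h : ℝ) (hh : 0 < h)
    (t t₀ s : Fin D → ℝ) :
    HasSum
      (fun β : Fin D → ℕ => ((-1 : ℝ) ^ (mDeg β) / (mFactorial β : ℝ)) *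
        hermiteFunMulti β (fun d => (t₀ d - s d) / Real.sqrt (2 * h ^ 2)) *
        mPow (fun d => (t d - t₀ d) / Real.sqrt (2 * h ^ 2)) β)
      (Real.exp (-(∑ d, (t d - s d) ^ 2) / (2 * h ^ 2))) := by
  set c := Real.sqrt (2 * h ^ 2) with hc_def
  have hc2 : c ^ 2 = 2 * h ^ 2 := Real.sq_sqrt (by positivity)
  have hc : c ≠ 0 := by
    intro h0
    rw [h0] at hc2
    nlinarith
  set a : Fin D → ℝ := fun d => (t₀ d - s d) / c with ha
  set x : Fin D → ℝ := fun d => (t d - t₀ d) / c with hx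
  have key := pi_hasSum D
    (fun d n => (-1 : ℝ) ^ n / (n.factorial : ℝ) * hermiteFun n (a d) * (x d) ^ n)
    (fun d => Real.exp (-(a d + x d) ^ 2)) (fun d => oneD (a d) (x d))
  have hterm : ∀ β : Fin D → ℕ,
      ((-1 : ℝ) ^ (mDeg β) / (mFactorial β : ℝ)) * hermiteFunMulti β a * mPow x β
        = ∏ d, ((-1 : ℝ) ^ (β d) / ((β d).factorial : ℝ) * hermiteFun (β d) (a d)
            * (x d) ^ (β d)) := by
    intro β
    rw [Finset.prod_mul_distrib, Finset.prod_mul_distrib, Finset.prod_div_distrib,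
      Finset.prod_pow_eq_pow_sum, mDeg, mFactorial, mPow, hermiteFunMulti, Nat.cast_prod]
  have hval : (∏ d, Real.exp (-(a d + x d) ^ 2))
      = Real.exp (-(∑ d, (t d - s d) ^ 2) / (2 * h ^ 2)) := by
    rw [← Real.exp_sum]
    congr 1
    have hd : ∀ d : Fin D, -(a d + x d) ^ 2 = -((t d - s d) ^ 2) / (2 * h ^ 2) := by
      intro d
      have hax : a d + x d = (t d - s d) / c := by
        rw [ha, hx, ← add_div]; ring_nf
      rw [hax, div_pow, hc2, neg_div]
    rw [Finset.sum_congr rfl (fun d _ => hd d), ← Finset.sum_div, ← Finset.sum_neg_distrib]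
  rw [← hval]
  simp only [hterm]
  exact key
end

section
/- Let D ≥ 1, h > 0, 0 < ρ < 1, p ≥ 1 an integer, c ∈ ℝᴰ, and let r₁, …, r_N ∈ ℝᴰ be arbitrary. Define the direct local moments L_β = Σ_{j=1}^{N} ((−1)^{|β|}/β!) h_β((c − r_j)/√(2h²)) for each multi-index β ∈ ℕᴰ. Then for every q ∈ ℝᴰ with |q[d] − c[d]| < ρh for all 1 ≤ d ≤ D, | Σ_{β ∈ ℕᴰ, β[d] < p ∀d} L_β ((q − c)/√(2h²))^β − Σ_{j=1}^{N} e^{−‖q − r_j‖²/(2h²)} | ≤ (N/(1 − ρ)^D) Σ_{k=0}^{D−1} C(D,k) (1 − ρᵖ)ᵏ (ρᵖ/√(p!))^{D−k}, where ‖·‖ is the Euclidean norm and C(D,k) is the binomial coefficient. -/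
open Finset

section AUX

open MeasureTheory Complex FourierTransform
open scoped Real

/-- The scaled Gaussian whose Fourier transform is `t ↦ exp (-t²)`. -/
noncomputable def gaussC : ℝ → ℂ :=
  fun x => ((Real.sqrt π * Real.exp (-(π ^ 2 * x ^ 2)) : ℝ) : ℂ)

lemma gaussC_eq (x : ℝ) :
    gaussC x = (Real.sqrt π : ℂ) * Complex.exp (-(π : ℂ) * π * (x : ℂ) ^ 2) := by
  unfold gaussC
  push_cast [Complex.ofReal_exp]
  ring_nf

lemma norm_gaussC (x : ℝ) : ‖gaussC x‖ = Real.sqrt π * Real.exp (-(π ^ 2 * x ^ 2)) := by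
  unfold gaussC
  rw [Complex.norm_real, Real.norm_eq_abs]
  exact abs_of_nonneg (by positivity)

lemma continuous_gaussC : Continuous gaussC := by
  unfold gaussC
  fun_prop

lemma fourier_gaussC_apply (t : ℝ) : 𝓕 gaussC t = Complex.exp (-(t : ℂ) ^ 2) := by
  have hb : (0:ℝ) < ((π : ℂ)).re := by simp [Real.pi_pos]
  have h := congrFun (fourier_gaussian_pi (b := (π : ℂ)) hb) t
  rw [Real.fourier_real_eq_integral_exp_smul] at h ⊢
  have hptw : ∀ v : ℝ, Complex.exp (↑(-2 * π * v * t) * I) • gaussC v =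
      (Real.sqrt π : ℂ) * (Complex.exp (↑(-2 * π * v * t) * I) •
        Complex.exp (-(π:ℂ) * π * (v:ℂ) ^ 2)) := by
    intro v
    rw [gaussC_eq, smul_eq_mul, smul_eq_mul]
    ring
  rw [funext hptw, integral_const_mul, h]
  have hsq : (Real.sqrt π : ℂ) = ((π:ℂ)) ^ (1/2 : ℂ) := by
    rw [Real.sqrt_eq_rpow, Complex.ofReal_cpow Real.pi_pos.le]
    norm_num
  have hne : ((π:ℂ)) ^ (1/2 : ℂ) ≠ 0 := by
    rw [← hsq]
    exact_mod_cast Real.sqrt_ne_zero'.mpr Real.pi_pos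
  have harg : (-(π:ℂ) / π * (t:ℂ) ^ 2) = -(t:ℂ)^2 := by
    rw [neg_div, div_self (Complex.ofReal_ne_zero.mpr Real.pi_ne_zero)]
    ring
  rw [harg, hsq, ← mul_assoc, mul_one_div, div_self hne, one_mul]

lemma fourier_gaussC : 𝓕 gaussC = fun t : ℝ => Complex.exp (-(t : ℂ) ^ 2) :=
  funext fourier_gaussC_apply

lemma integrable_abs_pow_gauss (n : ℕ) :
    Integrable (fun x : ℝ => |x| ^ n * Real.exp (-(π ^ 2 * x ^ 2))) := by
  have hb : (0:ℝ) < π ^ 2 := by positivity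
  have hs : (-1 : ℝ) < (n : ℝ) := by
    calc (-1 : ℝ) < 0 := by norm_num
    _ ≤ (n : ℝ) := Nat.cast_nonneg n
  have h := (integrable_rpow_mul_exp_neg_mul_sq hb hs).abs
  have heq : (fun x : ℝ => |x ^ ((n : ℝ)) * Real.exp (-(π ^ 2) * x ^ 2)|)
      = fun x : ℝ => |x| ^ n * Real.exp (-(π ^ 2 * x ^ 2)) := by
    funext x
    rw [Real.rpow_natCast, abs_mul, _root_.abs_pow, abs_of_pos (Real.exp_pos _), neg_mul]
  rwa [heq] at h

lemma integrable_dom {f : ℝ → ℂ} (hf : AEStronglyMeasurable f volume) (n : ℕ) (C : ℝ)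
    (hb : ∀ x, ‖f x‖ ≤ C * (|x| ^ n * Real.exp (-(π ^ 2 * x ^ 2)))) : Integrable f :=
  Integrable.mono' ((integrable_abs_pow_gauss n).const_mul C) hf (Filter.Eventually.of_forall hb)

lemma integrable_pow_smul_gaussC (n : ℕ) :
    Integrable (fun x : ℝ => x ^ n • gaussC x) := by
  refine integrable_dom ?_ n (Real.sqrt π) (fun x => ?_)
  · exact (Continuous.aestronglyMeasurable ((continuous_pow n).smul continuous_gaussC))
  · rw [norm_smul, Real.norm_eq_abs, _root_.abs_pow, norm_gaussC]
    exact le_of_eq (by ring)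

lemma integrable_cpow_smul_gaussC (n : ℕ) :
    Integrable (fun x : ℝ => ((-2 * (π:ℂ) * I * (x:ℂ)) ^ n) • gaussC x) := by
  refine integrable_dom ?_ n ((2 * π) ^ n * Real.sqrt π) (fun x => ?_)
  · exact (Continuous.aestronglyMeasurable
      (((continuous_const.mul Complex.continuous_ofReal).pow n).smul continuous_gaussC))
  · rw [norm_smul, norm_pow, norm_gaussC]
    have h1 : ‖(-2 * (π:ℂ) * I * (x:ℂ))‖ = 2 * π * |x| := by
      simp [norm_mul, abs_of_pos Real.pi_pos]
    rw [h1]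
    exact le_of_eq (by rw [mul_pow]; ring)

lemma iteratedDeriv_fourier_gaussC (n : ℕ) :
    iteratedDeriv n (𝓕 gaussC) =
      𝓕 (fun x : ℝ => ((-2 * (π:ℂ) * I * (x:ℂ)) ^ n) • gaussC x) := by
  exact Real.iteratedDeriv_fourier (N := (n : ℕ∞))
    (fun k _ => integrable_pow_smul_gaussC k) le_rfl

lemma norm_fourier_le (f : ℝ → ℂ) (t : ℝ) : ‖𝓕 f t‖ ≤ ∫ x : ℝ, ‖f x‖ := by
  rw [Real.fourier_real_eq_integral_exp_smul]
  refine (norm_integral_le_integral_norm _).trans_eq ?_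
  congr 1
  funext x
  rw [norm_smul, Complex.norm_exp_ofReal_mul_I, one_mul]

lemma moment_value (n : ℕ) :
    ∫ x : ℝ, |x| ^ n * Real.exp (-(π ^ 2 * x ^ 2))
      = Real.Gamma (((n:ℝ) + 1) / 2) / π ^ (n + 1) := by
  have hs : (-1 : ℝ) < (n : ℝ) := by
    calc (-1 : ℝ) < 0 := by norm_num
    _ ≤ (n : ℝ) := Nat.cast_nonneg n
  have h2 : ∫ x : ℝ, |x| ^ n * Real.exp (-(π ^ 2 * x ^ 2))
      = 2 * ∫ x in Set.Ioi (0:ℝ), x ^ n * Real.exp (-(π ^ 2 * x ^ 2)) := by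
    rw [← integral_comp_abs (f := fun y => y ^ n * Real.exp (-(π ^ 2 * y ^ 2)))]
    congr 1
    funext x
    rw [_root_.sq_abs]
  have h3' := integral_rpow_mul_exp_neg_mul_rpow (p := 2) (q := (n:ℝ)) (b := π ^ 2)
    two_pos hs (by positivity)
  have h3'' : ∫ x in Set.Ioi (0:ℝ), x ^ ((n:ℝ)) * Real.exp (-(π ^ 2) * x ^ (2:ℝ))
      = ∫ x in Set.Ioi (0:ℝ), x ^ n * Real.exp (-(π ^ 2 * x ^ 2)) := by
    refine setIntegral_congr_fun measurableSet_Ioi (fun x hx => ?_)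
    rw [Real.rpow_natCast, show x ^ (2:ℝ) = x ^ (2:ℕ) by
      rw [← Real.rpow_natCast x 2]; norm_num, neg_mul]
  have hrp : ((π:ℝ) ^ 2) ^ (-((n:ℝ) + 1) / 2) = ((π : ℝ) ^ (n + 1))⁻¹ := by
    rw [← Real.rpow_natCast π 2, ← Real.rpow_mul Real.pi_pos.le,
      show ((2:ℕ):ℝ) * (-((n:ℝ) + 1) / 2) = -((n:ℝ) + 1) by push_cast; ring,
      Real.rpow_neg Real.pi_pos.le,
      show ((n:ℝ) + 1) = ((n + 1 : ℕ) : ℝ) by push_cast; ring,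
      Real.rpow_natCast]
  rw [h2, ← h3'', h3', hrp]
  ring

lemma Gamma_half_le (n : ℕ) :
    Real.Gamma (((n:ℝ) + 1) / 2) ≤ Real.sqrt π * Real.Gamma ((n:ℝ) / 2 + 1) := by
  induction n using Nat.twoStepInduction with
  | zero =>
    simp only [Nat.cast_zero, zero_add, zero_div]
    rw [show (1:ℝ)/2 = 1/2 from rfl, Real.Gamma_one_half_eq, Real.Gamma_one]
    simp
  | one =>
    have h1 : ((1:ℕ):ℝ) = 1 := by norm_num
    rw [h1, show ((1:ℝ) + 1)/2 = 1 by ring, Real.Gamma_one]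
    have h32 : (1:ℝ)/2 + 1 = 1/2 + 1 := rfl
    rw [show (1:ℝ)/2 + 1 = (1/2 : ℝ) + 1 from rfl]
    rw [Real.Gamma_add_one (by norm_num), Real.Gamma_one_half_eq]
    have hππ : Real.sqrt π * ((1:ℝ)/2 * Real.sqrt π) = π / 2 := by
      rw [show Real.sqrt π * ((1:ℝ)/2 * Real.sqrt π) = (Real.sqrt π * Real.sqrt π) / 2 by ring,
        Real.mul_self_sqrt Real.pi_pos.le]
    rw [hππ]
    linarith [Real.two_le_pi]
  | more n ih _ =>
    have hpos : (0:ℝ) < ((n:ℝ) + 1) / 2 := by positivity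
    have e1 : ((n + 2 : ℕ) : ℝ) + 1 = ((n:ℝ) + 1) + 2 := by push_cast; ring
    have e2 : (((n:ℝ) + 1) + 2) / 2 = ((n:ℝ) + 1) / 2 + 1 := by ring
    have e3 : ((n + 2 : ℕ) : ℝ) / 2 + 1 = ((n:ℝ) / 2 + 1) + 1 := by push_cast; ring
    rw [e1, e2, e3, Real.Gamma_add_one hpos.ne', Real.Gamma_add_one (by positivity)]
    have hΓ : 0 ≤ Real.Gamma ((n:ℝ) / 2 + 1) := (Real.Gamma_pos_of_pos (by positivity)).le
    calc ((n:ℝ) + 1) / 2 * Real.Gamma (((n:ℝ) + 1) / 2)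
        ≤ ((n:ℝ) + 1) / 2 * (Real.sqrt π * Real.Gamma ((n:ℝ) / 2 + 1)) := by
          exact mul_le_mul_of_nonneg_left ih (by positivity)
      _ ≤ ((n:ℝ) / 2 + 1) * (Real.sqrt π * Real.Gamma ((n:ℝ) / 2 + 1)) := by
          refine mul_le_mul_of_nonneg_right (by linarith) ?_
          positivity
      _ = Real.sqrt π * (((n:ℝ) / 2 + 1) * Real.Gamma ((n:ℝ) / 2 + 1)) := by ring

lemma cramer_core (n : ℕ) :
    2 ^ n * Real.Gamma (((n:ℝ) + 1) / 2) / Real.sqrt π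
      ≤ Real.sqrt (2 ^ n * n.factorial) := by
  have hΓa : 0 < Real.Gamma (((n:ℝ) + 1) / 2) := Real.Gamma_pos_of_pos (by positivity)
  have hΓb : 0 < Real.Gamma ((n:ℝ) / 2 + 1) := Real.Gamma_pos_of_pos (by positivity)
  have hsp : 0 < Real.sqrt π := Real.sqrt_pos.mpr Real.pi_pos
  have hππ : Real.sqrt π * Real.sqrt π = π := Real.mul_self_sqrt Real.pi_pos.le
  -- duplication formula
  have hdup := Real.Gamma_mul_Gamma_add_half (((n:ℝ) + 1) / 2)
  rw [show ((n:ℝ) + 1) / 2 + 1 / 2 = (n:ℝ) / 2 + 1 by ring,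
    show 2 * (((n:ℝ) + 1) / 2) = (n:ℝ) + 1 by ring] at hdup
  rw [show (1:ℝ) - ((n:ℝ) + 1) = -(n:ℝ) by ring] at hdup
  have h2n : (2:ℝ) ^ (-(n:ℝ)) = ((2:ℝ) ^ n)⁻¹ := by
    rw [Real.rpow_neg (by norm_num), Real.rpow_natCast]
  have hfac : Real.Gamma ((n:ℝ) + 1) = (n.factorial : ℝ) := by
    exact_mod_cast Real.Gamma_nat_eq_factorial n
  rw [h2n, hfac] at hdup
  -- hdup : Γa * Γb = n! * (2^n)⁻¹ * √π
  have hle := Gamma_half_le n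
  set Γa := Real.Gamma (((n:ℝ) + 1) / 2)
  set Γb := Real.Gamma ((n:ℝ) / 2 + 1)
  have key : Γa ^ 2 ≤ π * (n.factorial : ℝ) / 2 ^ n := by
    have h1 : Γa * Γa ≤ Γa * (Real.sqrt π * Γb) :=
      mul_le_mul_of_nonneg_left hle hΓa.le
    have h2 : Γa * (Real.sqrt π * Γb) = Real.sqrt π * (Γa * Γb) := by ring
    rw [h2, hdup] at h1
    calc Γa ^ 2 = Γa * Γa := sq Γa
      _ ≤ Real.sqrt π * ((n.factorial : ℝ) * ((2:ℝ) ^ n)⁻¹ * Real.sqrt π) := h1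
      _ = (Real.sqrt π * Real.sqrt π) * (n.factorial : ℝ) * ((2:ℝ) ^ n)⁻¹ := by ring
      _ = π * (n.factorial : ℝ) / 2 ^ n := by rw [hππ]; ring
  have hLHS0 : 0 ≤ 2 ^ n * Γa / Real.sqrt π :=
    div_nonneg (mul_nonneg (by positivity) hΓa.le) hsp.le
  have h4 : (2 ^ n * Γa / Real.sqrt π) ^ 2 ≤ (Real.sqrt (2 ^ n * n.factorial)) ^ 2 := by
    rw [Real.sq_sqrt (by positivity), div_pow,
      show (Real.sqrt π) ^ 2 = π from Real.sq_sqrt Real.pi_pos.le,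
      div_le_iff₀ Real.pi_pos]
    calc (2 ^ n * Γa) ^ 2 = ((2:ℝ) ^ n) ^ 2 * Γa ^ 2 := by ring
      _ ≤ ((2:ℝ) ^ n) ^ 2 * (π * (n.factorial : ℝ) / 2 ^ n) :=
          mul_le_mul_of_nonneg_left key (by positivity)
      _ = 2 ^ n * (n.factorial : ℝ) * π := by field_simp
  have h5 := Real.sqrt_le_sqrt h4
  rwa [Real.sqrt_sq hLHS0, Real.sqrt_sq (Real.sqrt_nonneg _)] at h5

lemma norm_iteratedDeriv_fourier_gaussC (n : ℕ) (t : ℝ) :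
    ‖iteratedDeriv n (𝓕 gaussC) t‖ ≤ Real.sqrt (2 ^ n * n.factorial) := by
  rw [iteratedDeriv_fourier_gaussC]
  refine (norm_fourier_le _ t).trans ?_
  have hptw : ∀ x : ℝ, ‖((-2 * (π:ℂ) * I * (x:ℂ)) ^ n) • gaussC x‖
      = ((2 * π) ^ n * Real.sqrt π) * (|x| ^ n * Real.exp (-(π ^ 2 * x ^ 2))) := by
    intro x
    rw [norm_smul, norm_pow, norm_gaussC]
    have h1 : ‖(-2 * (π:ℂ) * I * (x:ℂ))‖ = 2 * π * |x| := by
      simp [norm_mul, abs_of_pos Real.pi_pos]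
    rw [h1, mul_pow, mul_pow]
    ring
  rw [funext hptw, integral_const_mul, moment_value]
  have heq : (2 * π) ^ n * Real.sqrt π * (Real.Gamma (((n:ℝ) + 1) / 2) / π ^ (n + 1))
      = 2 ^ n * Real.Gamma (((n:ℝ) + 1) / 2) / Real.sqrt π := by
    have hππ : Real.sqrt π * Real.sqrt π = π := Real.mul_self_sqrt Real.pi_pos.le
    have hπpos : (0:ℝ) < π := Real.pi_pos
    have hsp : (0:ℝ) < Real.sqrt π := Real.sqrt_pos.mpr hπpos
    have hπ1 : (π:ℝ) ^ (n + 1) = π ^ n * (Real.sqrt π * Real.sqrt π) := by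
      rw [hππ, pow_succ]
    rw [mul_pow, hπ1]
    field_simp
  rw [heq]
  exact cramer_core n

/-- The complex Gaussian `x ↦ exp (-x²)` as a function on `ℝ`. -/
noncomputable def phiC : ℝ → ℂ := fun x => Complex.exp (-(x : ℂ) ^ 2)

lemma contDiff_phiC : ContDiff ℝ ⊤ phiC := by
  have h1 : ContDiff ℝ ⊤ (fun x : ℝ => (x : ℂ)) := Complex.ofRealCLM.contDiff
  exact (Complex.contDiff_exp (𝕜 := ℝ)).comp ((h1.pow 2).neg)

lemma phiC_eq_fourier : phiC = 𝓕 gaussC := (fourier_gaussC).symm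

lemma realGauss_iteratedDeriv (n : ℕ) (t : ℝ) :
    iteratedDeriv n (fun x : ℝ => Real.exp (-x ^ 2)) t = (iteratedDeriv n phiC t).re := by
  induction n generalizing t with
  | zero =>
    simp only [iteratedDeriv_zero, phiC]
    rw [show (-(t:ℂ) ^ 2) = ((-t ^ 2 : ℝ) : ℂ) by push_cast; ring, Complex.exp_ofReal_re]
  | succ n ih =>
    rw [iteratedDeriv_succ, iteratedDeriv_succ,
      show iteratedDeriv n (fun x : ℝ => Real.exp (-x ^ 2)) = fun x => (iteratedDeriv n phiC x).re
        from funext ih]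
    have hd : HasDerivAt (iteratedDeriv n phiC) (deriv (iteratedDeriv n phiC) t) t :=
      ((contDiff_phiC.differentiable_iteratedDeriv n
        (Ne.lt_top (by simp))) t).hasDerivAt
    have h2 : HasDerivAt (fun x => (iteratedDeriv n phiC x).re)
        ((deriv (iteratedDeriv n phiC) t).re) t := by
      have := Complex.reCLM.hasFDerivAt.comp_hasDerivAt t hd
      exact this
    exact h2.deriv

lemma hermiteFun_eq_re (n : ℕ) (t : ℝ) :
    hermiteFun n t = (((-1 : ℂ)) ^ n * iteratedDeriv n phiC t).re := by
  unfold hermiteFun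
  rw [realGauss_iteratedDeriv,
    show ((-1:ℂ)) ^ n = (((-1:ℝ) ^ n : ℝ) : ℂ) by push_cast; ring,
    Complex.re_ofReal_mul]

/-- Cramér-type bound for the Hermite functions. -/
lemma hermiteFun_abs_le (n : ℕ) (t : ℝ) :
    |hermiteFun n t| ≤ Real.sqrt (2 ^ n * n.factorial) := by
  rw [hermiteFun_eq_re]
  calc |(((-1 : ℂ)) ^ n * iteratedDeriv n phiC t).re|
      ≤ ‖((-1 : ℂ)) ^ n * iteratedDeriv n phiC t‖ := Complex.abs_re_le_norm _
    _ = ‖iteratedDeriv n phiC t‖ := by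
        rw [norm_mul, norm_pow, norm_neg, norm_one, one_pow, one_mul]
    _ = ‖iteratedDeriv n (𝓕 gaussC) t‖ := by rw [phiC_eq_fourier]
    _ ≤ Real.sqrt (2 ^ n * n.factorial) := norm_iteratedDeriv_fourier_gaussC n t

lemma gauss_moment_le (n : ℕ) :
    ∫ x : ℝ, (2 * π * |x|) ^ n * (Real.sqrt π * Real.exp (-(π ^ 2 * x ^ 2)))
      ≤ Real.sqrt (2 ^ n * n.factorial) := by
  have hptw : (fun x : ℝ => (2 * π * |x|) ^ n * (Real.sqrt π * Real.exp (-(π ^ 2 * x ^ 2))))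
      = fun x : ℝ => ((2 * π) ^ n * Real.sqrt π) * (|x| ^ n * Real.exp (-(π ^ 2 * x ^ 2))) := by
    funext x; ring
  rw [hptw, integral_const_mul, moment_value]
  have hππ : Real.sqrt π * Real.sqrt π = π := Real.mul_self_sqrt Real.pi_pos.le
  have hsp : (0:ℝ) < Real.sqrt π := Real.sqrt_pos.mpr Real.pi_pos
  have heq : (2 * π) ^ n * Real.sqrt π * (Real.Gamma (((n:ℝ) + 1) / 2) / π ^ (n + 1))
      = 2 ^ n * Real.Gamma (((n:ℝ) + 1) / 2) / Real.sqrt π := by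
    have hπ1 : (π:ℝ) ^ (n + 1) = π ^ n * (Real.sqrt π * Real.sqrt π) := by
      rw [hππ, pow_succ]
    rw [mul_pow, hπ1]
    field_simp
  rw [heq]
  exact cramer_core n

lemma sqrt_fact_div_fact (n : ℕ) (a : ℝ) (ha : 0 ≤ a) :
    a / n.factorial * Real.sqrt (2 ^ n * n.factorial)
      = Real.sqrt (2 ^ n) * a / Real.sqrt n.factorial := by
  have hfp : (0:ℝ) < (n.factorial : ℝ) := by exact_mod_cast n.factorial_pos
  have hsf : (0:ℝ) < Real.sqrt (n.factorial : ℝ) := Real.sqrt_pos.mpr hfp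
  have hfac : ((n.factorial : ℝ)) = Real.sqrt (n.factorial : ℝ) * Real.sqrt (n.factorial : ℝ) :=
    (Real.mul_self_sqrt hfp.le).symm
  rw [Real.sqrt_mul (by positivity)]
  rw [show (a / (n.factorial:ℝ)) = a / (Real.sqrt (n.factorial:ℝ) * Real.sqrt (n.factorial:ℝ))
    by rw [← hfac]]
  field_simp

lemma hasSum_hermite_complex (t s : ℝ) :
    HasSum (fun n : ℕ => (s:ℂ) ^ n / n.factorial * ((-1:ℂ) ^ n * iteratedDeriv n (𝓕 gaussC) t))
      (Complex.exp (-((t:ℂ) - s) ^ 2)) := by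
  set F : ℕ → ℝ → ℂ := fun n x =>
    ((2 * (π:ℂ) * I * (x:ℂ) * (s:ℂ)) ^ n / n.factorial) *
      (Complex.exp (↑(-2 * π * x * t) * I) * gaussC x) with hF
  have hnormz : ∀ x : ℝ, ‖(2 * (π:ℂ) * I * (x:ℂ) * (s:ℂ))‖ = 2 * π * |x| * |s| := by
    intro x
    simp [norm_mul, abs_of_pos Real.pi_pos]
  have hnormF : ∀ n, ∀ x : ℝ, ‖F n x‖
      = (|s| ^ n / n.factorial) * ((2 * π * |x|) ^ n * (Real.sqrt π * Real.exp (-(π ^ 2 * x ^ 2)))) := by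
    intro n x
    rw [hF]
    rw [norm_mul, norm_div, norm_pow, hnormz x, norm_mul, Complex.norm_exp_ofReal_mul_I,
      one_mul, norm_gaussC, Complex.norm_natCast]
    ring
  have hFint : ∀ n, Integrable (F n) := by
    intro n
    refine integrable_dom ?_ n ((2 * π * |s|) ^ n / n.factorial * Real.sqrt π) (fun x => ?_)
    · refine Continuous.aestronglyMeasurable ?_
      refine Continuous.mul ?_ ?_
      · exact ((((continuous_const.mul Complex.continuous_ofReal).mul continuous_const).pow
          n).div_const _)
      · refine Continuous.mul ?_ continuous_gaussC
        exact Complex.continuous_exp.comp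
          ((Complex.continuous_ofReal.comp (by continuity)).mul continuous_const)
    · rw [hnormF n x]
      exact le_of_eq (by ring)
  have hmom : ∀ n, (∫ x : ℝ, ‖F n x‖)
      ≤ Real.sqrt (2 ^ n) * |s| ^ n / Real.sqrt n.factorial := by
    intro n
    rw [show (fun x : ℝ => ‖F n x‖) = fun x : ℝ => (|s| ^ n / n.factorial) *
        ((2 * π * |x|) ^ n * (Real.sqrt π * Real.exp (-(π ^ 2 * x ^ 2))))
      from funext (hnormF n)]
    rw [integral_const_mul]
    calc (|s| ^ n / (n.factorial:ℝ)) *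
          ∫ x : ℝ, (2 * π * |x|) ^ n * (Real.sqrt π * Real.exp (-(π ^ 2 * x ^ 2)))
        ≤ (|s| ^ n / (n.factorial:ℝ)) * Real.sqrt (2 ^ n * n.factorial) :=
          mul_le_mul_of_nonneg_left (gauss_moment_le n) (by positivity)
      _ = Real.sqrt (2 ^ n) * |s| ^ n / Real.sqrt n.factorial :=
          sqrt_fact_div_fact n (|s| ^ n) (by positivity)
  have hbound_summable : Summable (fun n : ℕ => Real.sqrt (2 ^ n) * |s| ^ n / Real.sqrt n.factorial) := by
    refine summable_of_ratio_norm_eventually_le (r := 1/2) (by norm_num) ?_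
    filter_upwards [Filter.eventually_ge_atTop (Nat.ceil (8 * s ^ 2))] with n hn
    have h8 : 8 * s ^ 2 ≤ (n:ℝ) + 1 := by
      have h1 : 8 * s ^ 2 ≤ (Nat.ceil (8 * s ^ 2) : ℝ) := Nat.le_ceil _
      have h2 : (Nat.ceil (8 * s ^ 2) : ℝ) ≤ (n:ℝ) := by exact_mod_cast hn
      linarith
    have hsq : 2 * Real.sqrt 2 * |s| ≤ Real.sqrt ((n:ℝ) + 1) := by
      rw [show 2 * Real.sqrt 2 * |s| = Real.sqrt ((2:ℝ)^2 * 2 * s ^ 2) by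
        rw [show (2:ℝ)^2 * 2 * s ^ 2 = (2:ℝ)^2 * 2 * s ^ 2 from rfl]
        rw [Real.sqrt_mul (by positivity), Real.sqrt_mul (by positivity),
          Real.sqrt_sq (by norm_num : (0:ℝ) ≤ 2), Real.sqrt_sq_eq_abs]]
      exact Real.sqrt_le_sqrt (by linarith)
    have hfp : (0:ℝ) < (n.factorial : ℝ) := by exact_mod_cast n.factorial_pos
    have hsf : (0:ℝ) < Real.sqrt (n.factorial : ℝ) := Real.sqrt_pos.mpr hfp
    have hsn1 : (0:ℝ) < Real.sqrt ((n:ℝ) + 1) := Real.sqrt_pos.mpr (by positivity)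
    have e1 : Real.sqrt ((2:ℝ) ^ (n+1)) = Real.sqrt 2 * Real.sqrt ((2:ℝ) ^ n) := by
      rw [pow_succ, Real.sqrt_mul (by positivity), mul_comm]
    have e2 : Real.sqrt ((n+1).factorial : ℝ)
        = Real.sqrt ((n:ℝ) + 1) * Real.sqrt (n.factorial : ℝ) := by
      rw [Nat.factorial_succ, Nat.cast_mul, Real.sqrt_mul (by positivity)]
      push_cast
      ring
    have hratio : Real.sqrt ((2:ℝ) ^ (n+1)) * |s| ^ (n+1) / Real.sqrt ((n+1).factorial : ℝ)
        = (Real.sqrt 2 * |s| / Real.sqrt ((n:ℝ) + 1))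
          * (Real.sqrt ((2:ℝ) ^ n) * |s| ^ n / Real.sqrt (n.factorial : ℝ)) := by
      rw [e1, e2, pow_succ]
      field_simp
    rw [Real.norm_eq_abs, Real.norm_eq_abs,
      _root_.abs_of_nonneg (show (0:ℝ) ≤ Real.sqrt ((2:ℝ) ^ (n+1)) * |s| ^ (n+1)
        / Real.sqrt (((n+1).factorial : ℕ) : ℝ) by positivity),
      _root_.abs_of_nonneg (show (0:ℝ) ≤ Real.sqrt ((2:ℝ) ^ n) * |s| ^ n
        / Real.sqrt ((n.factorial : ℕ) : ℝ) by positivity), hratio]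
    refine mul_le_mul_of_nonneg_right ?_ (by positivity)
    rw [div_le_iff₀ hsn1]
    nlinarith [Real.sqrt_nonneg (2:ℝ), abs_nonneg s]
  have hsummable : Summable (fun n => ∫ x : ℝ, ‖F n x‖) := by
    refine Summable.of_nonneg_of_le (fun n => integral_nonneg (fun x => norm_nonneg _))
      hmom hbound_summable
  have hps : ∀ x : ℝ, HasSum (fun n => F n x)
      (Complex.exp (↑(-2 * π * x * (t - s)) * I) • gaussC x) := by
    intro x
    have h0 : HasSum (fun n : ℕ => (2 * (π:ℂ) * I * (x:ℂ) * (s:ℂ)) ^ n / n.factorial)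
        (Complex.exp (2 * (π:ℂ) * I * (x:ℂ) * (s:ℂ))) := by
      have h := NormedSpace.expSeries_div_hasSum_exp ((2 * (π:ℂ) * I * (x:ℂ) * (s:ℂ)))
      rwa [← Complex.exp_eq_exp_ℂ] at h
    have h1 := h0.mul_right (Complex.exp (↑(-2 * π * x * t) * I) * gaussC x)
    have h2 : Complex.exp (2 * (π:ℂ) * I * (x:ℂ) * (s:ℂ))
        * (Complex.exp (↑(-2 * π * x * t) * I) * gaussC x)
        = Complex.exp (↑(-2 * π * x * (t - s)) * I) • gaussC x := by
      rw [smul_eq_mul, ← mul_assoc, ← Complex.exp_add]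
      congr 2
      push_cast
      ring
    rwa [h2] at h1
  have key := hasSum_integral_of_summable_integral_norm hFint hsummable
  have hval : (∫ x : ℝ, ∑' n, F n x) = 𝓕 gaussC (t - s) := by
    rw [Real.fourier_real_eq_integral_exp_smul]
    refine integral_congr_ae (Filter.Eventually.of_forall (fun x => ?_))
    exact (hps x).tsum_eq
  have hterm : ∀ n, (∫ x : ℝ, F n x)
      = (s:ℂ) ^ n / n.factorial * ((-1:ℂ) ^ n * iteratedDeriv n (𝓕 gaussC) t) := by
    intro n
    rw [iteratedDeriv_fourier_gaussC, Real.fourier_real_eq_integral_exp_smul,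
      ← mul_assoc, ← integral_const_mul]
    refine integral_congr_ae (Filter.Eventually.of_forall (fun x => ?_))
    have hz : (2 * (π:ℂ) * I * (x:ℂ) * (s:ℂ)) ^ n
        = (s:ℂ) ^ n * (-1:ℂ) ^ n * (-2 * (π:ℂ) * I * (x:ℂ)) ^ n := by
      rw [← mul_pow, ← mul_pow]
      congr 1
      ring
    rw [hF]
    simp only []
    rw [smul_eq_mul, smul_eq_mul, hz]
    ring
  rw [hval] at key
  rw [show (fun n => ∫ x : ℝ, F n x)
      = (fun n : ℕ => (s:ℂ) ^ n / n.factorial * ((-1:ℂ) ^ n * iteratedDeriv n (𝓕 gaussC) t))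
    from funext hterm] at key
  rw [fourier_gaussC_apply] at key
  rwa [show ((t - s : ℝ) : ℂ) = (t:ℂ) - s by push_cast; ring] at key

/-- Generating-function expansion of the Gaussian in terms of Hermite functions. -/
lemma hasSum_hermite (t s : ℝ) :
    HasSum (fun n : ℕ => s ^ n / n.factorial * hermiteFun n t) (Real.exp (-(t - s) ^ 2)) := by
  have hC := hasSum_hermite_complex t s
  have h3 := Complex.reCLM.hasSum hC
  have e1 : ∀ n : ℕ, Complex.reCLM ((s:ℂ) ^ n / n.factorial
      * ((-1:ℂ) ^ n * iteratedDeriv n (𝓕 gaussC) t)) = s ^ n / n.factorial * hermiteFun n t := by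
    intro n
    rw [hermiteFun_eq_re, phiC_eq_fourier, Complex.reCLM_apply,
      show ((s:ℂ) ^ n / (n.factorial:ℂ)) = (((s ^ n / n.factorial : ℝ)):ℂ) by push_cast; ring,
      Complex.re_ofReal_mul]
  have e2 : Complex.reCLM (Complex.exp (-((t:ℂ) - s) ^ 2)) = Real.exp (-(t - s) ^ 2) := by
    rw [Complex.reCLM_apply,
      show -((t:ℂ) - s) ^ 2 = ((-(t - s) ^ 2 : ℝ) : ℂ) by push_cast; ring,
      Complex.exp_ofReal_re]
  rw [funext e1, e2] at h3
  exact h3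

end AUX

section TRUNC

lemma sqrt_two_pow (n : ℕ) : Real.sqrt ((2:ℝ) ^ n) = (Real.sqrt 2) ^ n := by
  induction n with
  | zero => simp
  | succ n ih => rw [pow_succ, pow_succ, Real.sqrt_mul (by positivity), ih]

lemma hermite_term_bound {ρ : ℝ} (hρ0 : 0 ≤ ρ) {s : ℝ} (hs : Real.sqrt 2 * |s| ≤ ρ)
    (n : ℕ) (t : ℝ) :
    |s ^ n / n.factorial * hermiteFun n t| ≤ ρ ^ n / Real.sqrt n.factorial := by
  have hfp : (0:ℝ) < (n.factorial : ℝ) := by exact_mod_cast n.factorial_pos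
  have hsf : (0:ℝ) < Real.sqrt (n.factorial : ℝ) := Real.sqrt_pos.mpr hfp
  have h1 : |s ^ n / (n.factorial:ℝ) * hermiteFun n t|
      = |s| ^ n / (n.factorial:ℝ) * |hermiteFun n t| := by
    rw [abs_mul, abs_div, abs_pow, Nat.abs_cast]
  rw [h1]
  calc |s| ^ n / (n.factorial:ℝ) * |hermiteFun n t|
      ≤ |s| ^ n / (n.factorial:ℝ) * Real.sqrt (2 ^ n * n.factorial) :=
        mul_le_mul_of_nonneg_left (hermiteFun_abs_le n t) (by positivity)
    _ = Real.sqrt (2 ^ n) * |s| ^ n / Real.sqrt n.factorial :=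
        sqrt_fact_div_fact n (|s| ^ n) (by positivity)
    _ = (Real.sqrt 2 * |s|) ^ n / Real.sqrt n.factorial := by
        rw [mul_pow, sqrt_two_pow]
    _ ≤ ρ ^ n / Real.sqrt n.factorial := by
        gcongr


lemma oneDim_S_bound {ρ : ℝ} (hρ0 : 0 ≤ ρ) {s : ℝ} (hs : Real.sqrt 2 * |s| ≤ ρ)
    (p : ℕ) (t : ℝ) :
    |∑ n ∈ Finset.range p, s ^ n / n.factorial * hermiteFun n t|
      ≤ ∑ n ∈ Finset.range p, ρ ^ n := by
  refine (Finset.abs_sum_le_sum_abs _ _).trans ?_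
  refine Finset.sum_le_sum (fun n _ => ?_)
  refine (hermite_term_bound hρ0 hs n t).trans ?_
  have h1 : (1:ℝ) ≤ Real.sqrt n.factorial := by
    rw [show (1:ℝ) = Real.sqrt 1 from Real.sqrt_one.symm]
    exact Real.sqrt_le_sqrt (by exact_mod_cast n.factorial_pos)
  exact div_le_self (by positivity) h1

lemma oneDim_tail_bound {ρ : ℝ} (hρ0 : 0 ≤ ρ) (hρ1 : ρ < 1) {s : ℝ}
    (hs : Real.sqrt 2 * |s| ≤ ρ) (p : ℕ) (t : ℝ) :
    |Real.exp (-(t - s) ^ 2) - ∑ n ∈ Finset.range p, s ^ n / n.factorial * hermiteFun n t|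
      ≤ ρ ^ p / Real.sqrt p.factorial / (1 - ρ) := by
  set f : ℕ → ℝ := fun n => s ^ n / n.factorial * hermiteFun n t with hf
  have H := hasSum_hermite t s
  have Ht : HasSum (fun n => f (n + p))
      (Real.exp (-(t - s) ^ 2) - ∑ n ∈ Finset.range p, f n) := by
    refine (hasSum_nat_add_iff p).mpr ?_
    rwa [sub_add_cancel]
  have hsp : (0:ℝ) < Real.sqrt (p.factorial : ℝ) :=
    Real.sqrt_pos.mpr (by exact_mod_cast p.factorial_pos)
  have hb2 : ∀ n, |f (n + p)| ≤ ρ ^ p / Real.sqrt p.factorial * ρ ^ n := by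
    intro n
    refine (hermite_term_bound hρ0 hs (n + p) t).trans ?_
    have hfple : (p.factorial : ℝ) ≤ ((n + p).factorial : ℝ) := by
      exact_mod_cast Nat.factorial_le (by omega)
    calc ρ ^ (n + p) / Real.sqrt (((n + p).factorial : ℕ) : ℝ)
        ≤ ρ ^ (n + p) / Real.sqrt ((p.factorial : ℕ) : ℝ) := by
          gcongr
      _ = ρ ^ p / Real.sqrt (p.factorial : ℝ) * ρ ^ n := by rw [pow_add]; ring
  have hsum_b : Summable (fun n : ℕ => ρ ^ p / Real.sqrt p.factorial * ρ ^ n) :=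
    (summable_geometric_of_lt_one hρ0 hρ1).mul_left _
  have habs : Summable (fun n => |f (n + p)|) := Ht.summable.abs
  rw [← Ht.tsum_eq]
  calc |∑' n, f (n + p)| ≤ ∑' n, |f (n + p)| := by
        simpa [Real.norm_eq_abs] using
          norm_tsum_le_tsum_norm (f := fun n => f (n + p))
            (by simpa [Real.norm_eq_abs] using habs)
    _ ≤ ∑' n, ρ ^ p / Real.sqrt p.factorial * ρ ^ n := Summable.tsum_le_tsum hb2 habs hsum_b
    _ = ρ ^ p / Real.sqrt p.factorial * ∑' n, ρ ^ n := tsum_mul_left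
    _ = ρ ^ p / Real.sqrt p.factorial / (1 - ρ) := by
        rw [tsum_geometric_of_lt_one hρ0 hρ1]
        ring

lemma abs_prod_sub_prod_le {ι : Type*} (s : Finset ι) (f S : ι → ℝ) (A E : ℝ)
    (hA : 0 ≤ A) (hE : 0 ≤ E) (hS : ∀ i ∈ s, |S i| ≤ A) (hfS : ∀ i ∈ s, |f i - S i| ≤ E) :
    |∏ i ∈ s, f i - ∏ i ∈ s, S i| ≤ (A + E) ^ s.card - A ^ s.card := by
  induction s using Finset.cons_induction with
  | empty => simp
  | cons a s ha ih =>
    rw [Finset.prod_cons, Finset.prod_cons, Finset.card_cons]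
    have hSa : |S a| ≤ A := hS a (Finset.mem_cons_self a s)
    have hfa : |f a - S a| ≤ E := hfS a (Finset.mem_cons_self a s)
    have hfA : |f a| ≤ A + E := by
      calc |f a| = |S a + (f a - S a)| := by congr 1; ring
        _ ≤ |S a| + |f a - S a| := abs_add_le _ _
        _ ≤ A + E := add_le_add hSa hfa
    have hprodS : |∏ i ∈ s, S i| ≤ A ^ s.card := by
      rw [Finset.abs_prod]
      calc ∏ i ∈ s, |S i| ≤ ∏ _i ∈ s, A :=
          Finset.prod_le_prod (fun i _ => abs_nonneg _)
            (fun i hi => hS i (Finset.mem_cons_of_mem hi))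
        _ = A ^ s.card := Finset.prod_const A
    have ihs := ih (fun i hi => hS i (Finset.mem_cons_of_mem hi))
      (fun i hi => hfS i (Finset.mem_cons_of_mem hi))
    calc |f a * ∏ i ∈ s, f i - S a * ∏ i ∈ s, S i|
        = |f a * (∏ i ∈ s, f i - ∏ i ∈ s, S i) + (f a - S a) * ∏ i ∈ s, S i| := by
          congr 1; ring
      _ ≤ |f a * (∏ i ∈ s, f i - ∏ i ∈ s, S i)| + |(f a - S a) * ∏ i ∈ s, S i| := abs_add_le _ _
      _ = |f a| * |∏ i ∈ s, f i - ∏ i ∈ s, S i| + |f a - S a| * |∏ i ∈ s, S i| := by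
          rw [abs_mul, abs_mul]
      _ ≤ (A + E) * ((A + E) ^ s.card - A ^ s.card) + E * A ^ s.card := by
          refine add_le_add (mul_le_mul hfA ihs (abs_nonneg _) (by positivity)) ?_
          exact mul_le_mul hfa hprodS (abs_nonneg _) hE
      _ = (A + E) ^ (s.card + 1) - A ^ (s.card + 1) := by ring

lemma binom_diff (x y : ℝ) (D : ℕ) :
    (x + y) ^ D - x ^ D
      = ∑ k ∈ Finset.range D, (D.choose k : ℝ) * x ^ k * y ^ (D - k) := by
  rw [add_pow, Finset.sum_range_succ]
  simp only [Nat.choose_self, Nat.sub_self, pow_zero, Nat.cast_one, mul_one, one_mul]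
  rw [add_sub_cancel_right]
  exact Finset.sum_congr rfl (fun k _ => by ring)

lemma sum_prod_swap {D p N : ℕ} (w : Fin N → Fin D → ℕ → ℝ) :
    ∑ β : Fin D → Fin p, ∑ j, ∏ d, w j d (β d)
      = ∑ j, ∏ d, ∑ n ∈ Finset.range p, w j d n := by
  rw [Finset.sum_comm]
  refine Finset.sum_congr rfl (fun j _ => ?_)
  calc ∑ β : Fin D → Fin p, ∏ d, w j d (β d)
      = ∏ d, ∑ n : Fin p, w j d (n : ℕ) := by
        rw [Finset.prod_univ_sum, Fintype.piFinset_univ]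
    _ = ∏ d, ∑ n ∈ Finset.range p, w j d n := by
        refine Finset.prod_congr rfl (fun d _ => ?_)
        exact Fin.sum_univ_eq_sum_range (fun n => w j d n) p

end TRUNC

/-- Error bound for evaluating a truncated local expansion: with direct local
moments `L_β = Σ_j ((−1)^{|β|}/β!) h_β((c − r_j)/√(2h²))`, for every query point
`q` with `|q[d] − c[d]| < ρh` for all `d`,
`|Σ_{β < p} L_β ((q−c)/√(2h²))^β − Σ_j e^{−‖q−r_j‖²/(2h²)}|
 ≤ (N/(1−ρ)^D) Σ_{k<D} C(D,k) (1−ρᵖ)ᵏ (ρᵖ/√(p!))^{D−k}`. -/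
theorem truncated_local_expansion_bound (D : ℕ) (hD : 1 ≤ D)
    (h ρ : ℝ) (hh : 0 < h) (hρ0 : 0 < ρ) (hρ1 : ρ < 1)
    (p : ℕ) (hp : 1 ≤ p) (c : Fin D → ℝ)
    (N : ℕ) (r : Fin N → Fin D → ℝ)
    (L : (Fin D → ℕ) → ℝ)
    (hL : ∀ β : Fin D → ℕ, L β =
      ∑ j, ((-1 : ℝ) ^ (mDeg β) / (mFactorial β : ℝ)) *
        hermiteFunMulti β (fun d => (c d - r j d) / Real.sqrt (2 * h ^ 2)))
    (q : Fin D → ℝ) (hq : ∀ d, |q d - c d| < ρ * h) :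
    |(∑ β : Fin D → Fin p, L (fun d => (β d : ℕ)) *
        mPow (fun d => (q d - c d) / Real.sqrt (2 * h ^ 2)) (fun d => (β d : ℕ))) -
        ∑ j, Real.exp (-(∑ d, (q d - r j d) ^ 2) / (2 * h ^ 2))|
      ≤ (N : ℝ) / (1 - ρ) ^ D *
        ∑ k ∈ Finset.range D, (D.choose k : ℝ) * (1 - ρ ^ p) ^ k *
          (ρ ^ p / Real.sqrt (Nat.factorial p)) ^ (D - k) := by
  have h1ρ : (0:ℝ) < 1 - ρ := by linarith
  have hσeq : Real.sqrt (2 * h ^ 2) = Real.sqrt 2 * h := by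
    rw [Real.sqrt_mul (by norm_num : (0:ℝ) ≤ 2), Real.sqrt_sq hh.le]
  set σ : ℝ := Real.sqrt (2 * h ^ 2) with hσdef
  have hσpos : 0 < σ := by rw [hσeq]; positivity
  have hσsq : σ ^ 2 = 2 * h ^ 2 := Real.sq_sqrt (by positivity)
  -- the one-dimensional data
  set w : Fin N → Fin D → ℕ → ℝ := fun j d n =>
    (-((q d - c d) / σ)) ^ n / n.factorial * hermiteFun n ((c d - r j d) / σ) with hw
  have hsmall : ∀ d, Real.sqrt 2 * |(-((q d - c d) / σ))| ≤ ρ := by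
    intro d
    rw [abs_neg, abs_div, abs_of_pos hσpos, hσeq,
      show Real.sqrt 2 * (|q d - c d| / (Real.sqrt 2 * h)) = |q d - c d| / h by
        rw [mul_div_assoc', mul_div_mul_left _ _ (by positivity : Real.sqrt 2 ≠ 0)],
      div_le_iff₀ hh]
    exact (hq d).le
  -- step 1: rewrite the expansion sum
  have hterm : ∀ β : Fin D → Fin p,
      L (fun d => (β d : ℕ)) * mPow (fun d => (q d - c d) / σ) (fun d => (β d : ℕ))
      = ∑ j, ∏ d, w j d (β d) := by
    intro β
    rw [hL, Finset.sum_mul]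
    refine Finset.sum_congr rfl (fun j _ => ?_)
    unfold hermiteFunMulti mPow mDeg mFactorial
    rw [← Finset.prod_pow_eq_pow_sum, Nat.cast_prod, ← Finset.prod_div_distrib,
      ← Finset.prod_mul_distrib, ← Finset.prod_mul_distrib]
    refine Finset.prod_congr rfl (fun d _ => ?_)
    simp only [hw]
    rw [neg_pow ((q d - c d) / σ)]
    ring
  have hLHS : (∑ β : Fin D → Fin p, L (fun d => (β d : ℕ)) *
      mPow (fun d => (q d - c d) / σ) (fun d => (β d : ℕ)))
      = ∑ j, ∏ d, ∑ n ∈ Finset.range p, w j d n := by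
    rw [Finset.sum_congr rfl (fun β _ => hterm β), sum_prod_swap]
  -- step 2: rewrite the Gaussian sums
  have hexp : ∀ j, Real.exp (-(∑ d, (q d - r j d) ^ 2) / (2 * h ^ 2))
      = ∏ d, Real.exp (-(((c d - r j d) / σ) - (-((q d - c d) / σ))) ^ 2) := by
    intro j
    rw [← Real.exp_sum]
    congr 1
    have hptd : ∀ d : Fin D, -((((c d - r j d) / σ) - (-((q d - c d) / σ))) ^ 2)
        = -((q d - r j d) ^ 2 / (2 * h ^ 2)) := by
      intro d
      have h3 : ((c d - r j d) / σ) - (-((q d - c d) / σ)) = (q d - r j d) / σ := by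
        rw [sub_neg_eq_add, ← add_div]
        ring_nf
      rw [h3, div_pow, hσsq]
    rw [Finset.sum_congr rfl (fun d _ => hptd d), neg_div, Finset.sum_div,
      ← Finset.sum_neg_distrib]
  -- step 3: apply the per-coordinate bounds
  set A : ℝ := (1 - ρ ^ p) / (1 - ρ) with hA
  set Ee : ℝ := ρ ^ p / Real.sqrt p.factorial / (1 - ρ) with hE
  have hgeom : ∑ n ∈ Finset.range p, ρ ^ n = A := by
    rw [hA, geom_sum_eq (ne_of_lt hρ1), div_eq_div_iff (by linarith) (by linarith)]
    ring
  have hA0 : 0 ≤ A := by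
    rw [← hgeom]
    exact Finset.sum_nonneg (fun n _ => by positivity)
  have hE0 : 0 ≤ Ee := by
    rw [hE]
    positivity
  have hper : ∀ j, |∏ d, (∑ n ∈ Finset.range p, w j d n)
      - ∏ d, Real.exp (-(((c d - r j d) / σ) - (-((q d - c d) / σ))) ^ 2)|
      ≤ (A + Ee) ^ D - A ^ D := by
    intro j
    rw [abs_sub_comm]
    have hSb : ∀ d : Fin D, |∑ n ∈ Finset.range p, w j d n| ≤ A := by
      intro d
      rw [← hgeom]
      exact oneDim_S_bound hρ0.le (hsmall d) p _
    have hEb : ∀ d : Fin D, |Real.exp (-(((c d - r j d) / σ) - (-((q d - c d) / σ))) ^ 2)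
        - ∑ n ∈ Finset.range p, w j d n| ≤ Ee := by
      intro d
      exact oneDim_tail_bound hρ0.le hρ1 (hsmall d) p _
    have := abs_prod_sub_prod_le Finset.univ
      (fun d => Real.exp (-(((c d - r j d) / σ) - (-((q d - c d) / σ))) ^ 2))
      (fun d => ∑ n ∈ Finset.range p, w j d n) A Ee hA0 hE0
      (fun d _ => hSb d) (fun d _ => hEb d)
    simpa [Finset.card_univ] using this
  rw [hLHS, Finset.sum_congr rfl (fun j _ => hexp j), ← Finset.sum_sub_distrib]
  calc |∑ j, (∏ d, (∑ n ∈ Finset.range p, w j d n)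
        - ∏ d, Real.exp (-(((c d - r j d) / σ) - (-((q d - c d) / σ))) ^ 2))|
      ≤ ∑ j, |∏ d, (∑ n ∈ Finset.range p, w j d n)
        - ∏ d, Real.exp (-(((c d - r j d) / σ) - (-((q d - c d) / σ))) ^ 2)| :=
        Finset.abs_sum_le_sum_abs _ _
    _ ≤ ∑ _j : Fin N, ((A + Ee) ^ D - A ^ D) := Finset.sum_le_sum (fun j _ => hper j)
    _ = (N : ℝ) * ((A + Ee) ^ D - A ^ D) := by
        rw [Finset.sum_const, Finset.card_univ, Fintype.card_fin, nsmul_eq_mul]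
    _ = (N : ℝ) / (1 - ρ) ^ D *
        ∑ k ∈ Finset.range D, (D.choose k : ℝ) * (1 - ρ ^ p) ^ k *
          (ρ ^ p / Real.sqrt (Nat.factorial p)) ^ (D - k) := ?_
  rw [binom_diff, Finset.mul_sum, Finset.mul_sum]
  refine Finset.sum_congr rfl (fun k hk => ?_)
  have hkD : k ≤ D := le_of_lt (Finset.mem_range.mp hk)
  have hpowsplit : ((1 - ρ) ^ k) * ((1 - ρ) ^ (D - k)) = (1 - ρ) ^ D := by
    rw [← pow_add, Nat.add_sub_cancel' hkD]
  have hne1 : (1 - ρ) ≠ 0 := h1ρ.ne'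
  rw [hA, hE, ← hpowsplit, div_pow, div_pow]
  field_simp
  try ring
  try exact Or.inl trivial
  try tauto
end
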